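/- Let a, b be real numbers with |a| + |b| > 0, set c := 36000 (|a|+|b|)⁴ and J₊ := (-20 + √(400 + c)) / c (the unique positive zero of f(J) = -J + 40J² + cJ³). Let u, v : ℝ × ℝ → ℝ be smooth (C^∞) on [0,∞) × [0,1], satisfying the coupled Burgers' equations ∂_t u = ∂_{xx} u − u ∂_x u − a ∂_x(uv) and ∂_t v = ∂_{xx} v − v ∂_x v − b ∂_x(uv) for all t ≥ 0 and x ∈ [0,1], with Dirichlet boundary conditions u(t,0) = u(t,1) = v(t,0) = v(t,1) = 0 for all t ≥ 0. Assume ½(∫₀¹ (∂_x u(0,x))² dx + ∫₀¹ (∂_x v(0,x))² dx) < J₊. Then the trajectory approaches the zero equilibrium in the max-norm: sup_{x ∈ [0,1]} |u(t,x)| → 0 and sup_{x ∈ [0,1]} |v(t,x)| → 0 as t → ∞. -/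

import Mathlib

open Set MeasureTheory intervalIntegral Filter Topology

noncomputable section CB

def CBS : Set (ℝ × ℝ) := Set.Ici (0:ℝ) ×ˢ Set.Icc (0:ℝ) 1

lemma CBS_udiff : UniqueDiffOn ℝ CBS :=
  (uniqueDiffOn_Ici 0).prod (uniqueDiffOn_Icc zero_lt_one)

lemma CBS_mem {t x : ℝ} (ht : 0 ≤ t) (hx : x ∈ Icc (0:ℝ) 1) : (t, x) ∈ CBS := ⟨ht, hx⟩

/-- clean spatial derivative -/
def pdx (w : ℝ × ℝ → ℝ) : ℝ × ℝ → ℝ := fun p => fderivWithin ℝ w CBS p (0, 1)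

/-- clean time derivative -/
def pdt (w : ℝ × ℝ → ℝ) : ℝ × ℝ → ℝ := fun p => fderivWithin ℝ w CBS p (1, 0)

variable {w : ℝ × ℝ → ℝ}

lemma contDiffOn_pdx (hw : ContDiffOn ℝ (⊤:ℕ∞) w CBS) : ContDiffOn ℝ (⊤:ℕ∞) (pdx w) CBS := by
  have h1 : ContDiffOn ℝ (⊤:ℕ∞) (fderivWithin ℝ w CBS) CBS :=
    hw.fderivWithin CBS_udiff (by simp)
  exact (ContinuousLinearMap.apply ℝ ℝ ((0:ℝ), (1:ℝ))).contDiff.comp_contDiffOn h1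

lemma contDiffOn_pdt (hw : ContDiffOn ℝ (⊤:ℕ∞) w CBS) : ContDiffOn ℝ (⊤:ℕ∞) (pdt w) CBS := by
  have h1 : ContDiffOn ℝ (⊤:ℕ∞) (fderivWithin ℝ w CBS) CBS :=
    hw.fderivWithin CBS_udiff (by simp)
  exact (ContinuousLinearMap.apply ℝ ℝ ((1:ℝ), (0:ℝ))).contDiff.comp_contDiffOn h1

/-- spatial slice derivative, within `Icc 0 1`. -/
lemma hasDerivWithinAt_slice_x (hw : ContDiffOn ℝ (⊤:ℕ∞) w CBS) {t x : ℝ} (ht : 0 ≤ t)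
    (hx : x ∈ Icc (0:ℝ) 1) :
    HasDerivWithinAt (fun y => w (t, y)) (pdx w (t, x)) (Icc (0:ℝ) 1) x := by
  have hF : HasFDerivWithinAt w (fderivWithin ℝ w CBS (t, x)) CBS (t, x) :=
    (hw.differentiableOn (by simp) (t, x) (CBS_mem ht hx)).hasFDerivWithinAt
  have hj : HasDerivWithinAt (fun y => ((t, y) : ℝ × ℝ)) ((0:ℝ), (1:ℝ)) (Icc (0:ℝ) 1) x :=
    ((hasDerivAt_const x t).prodMk (hasDerivAt_id x)).hasDerivWithinAt
  exact hF.comp_hasDerivWithinAt x hj (fun y hy => CBS_mem ht hy)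

/-- honest spatial slice derivative at interior `x`. -/
lemma hasDerivAt_slice_x (hw : ContDiffOn ℝ (⊤:ℕ∞) w CBS) {t x : ℝ} (ht : 0 ≤ t)
    (hx : x ∈ Ioo (0:ℝ) 1) :
    HasDerivAt (fun y => w (t, y)) (pdx w (t, x)) x :=
  (hasDerivWithinAt_slice_x hw ht (Ioo_subset_Icc_self hx)).hasDerivAt
    (Icc_mem_nhds hx.1 hx.2)

/-- honest time slice derivative at `t > 0`, any `x ∈ [0,1]`. -/
lemma hasDerivAt_slice_t (hw : ContDiffOn ℝ (⊤:ℕ∞) w CBS) {t x : ℝ} (ht : 0 < t)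
    (hx : x ∈ Icc (0:ℝ) 1) :
    HasDerivAt (fun s => w (s, x)) (pdt w (t, x)) t := by
  have hF : HasFDerivWithinAt w (fderivWithin ℝ w CBS (t, x)) CBS (t, x) :=
    (hw.differentiableOn (by simp) (t, x) (CBS_mem ht.le hx)).hasFDerivWithinAt
  have hj : HasDerivWithinAt (fun s => ((s, x) : ℝ × ℝ)) ((1:ℝ), (0:ℝ)) (Ici (0:ℝ)) t :=
    ((hasDerivAt_id t).prodMk (hasDerivAt_const t x)).hasDerivWithinAt
  exact (hF.comp_hasDerivWithinAt t hj (fun s hs => CBS_mem hs hx)).hasDerivAt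
    (Ici_mem_nhds ht)

lemma slice_contOn_x (hw : ContinuousOn w CBS) {t : ℝ} (ht : 0 ≤ t) :
    ContinuousOn (fun y => w (t, y)) (Icc (0:ℝ) 1) := by
  have : ContinuousOn (fun y => ((t, y) : ℝ × ℝ)) (Icc (0:ℝ) 1) :=
    (continuous_const.prodMk continuous_id).continuousOn
  exact hw.comp this (fun y hy => CBS_mem ht hy)

lemma CBS_mem_nhds {t x : ℝ} (ht : 0 < t) (hx : x ∈ Ioo (0:ℝ) 1) :
    CBS ∈ 𝓝 ((t, x) : ℝ × ℝ) := by
  have hopen : IsOpen (Ioi (0:ℝ) ×ˢ Ioo (0:ℝ) 1) := isOpen_Ioi.prod isOpen_Ioo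
  exact Filter.mem_of_superset (hopen.mem_nhds ⟨ht, hx⟩)
    (Set.prod_mono Ioi_subset_Ici_self Ioo_subset_Icc_self)

lemma pdt_pdx_symm (hw : ContDiffOn ℝ (⊤:ℕ∞) w CBS) {t x : ℝ} (ht : 0 < t)
    (hx : x ∈ Ioo (0:ℝ) 1) : pdt (pdx w) (t, x) = pdx (pdt w) (t, x) := by
  set p : ℝ × ℝ := (t, x) with hp
  have hN : CBS ∈ 𝓝 p := CBS_mem_nhds ht hx
  have hopen : IsOpen (Ioi (0:ℝ) ×ˢ Ioo (0:ℝ) 1) := isOpen_Ioi.prod isOpen_Ioo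
  have hUsub : (Ioi (0:ℝ) ×ˢ Ioo (0:ℝ) 1) ⊆ CBS :=
    Set.prod_mono Ioi_subset_Ici_self Ioo_subset_Icc_self
  have hUN : (Ioi (0:ℝ) ×ˢ Ioo (0:ℝ) 1) ∈ 𝓝 p := hopen.mem_nhds ⟨ht, hx⟩
  have hev : ∀ᶠ q in 𝓝 p, HasFDerivAt w (fderiv ℝ w q) q := by
    filter_upwards [hUN] with q hq
    have hNq : CBS ∈ 𝓝 q := Filter.mem_of_superset (hopen.mem_nhds hq) hUsub
    exact (((hw.contDiffAt hNq)).differentiableAt (by simp)).hasFDerivAt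
  have hCA : ContDiffAt ℝ (⊤:ℕ∞) w p := hw.contDiffAt hN
  have hd : DifferentiableAt ℝ (fderiv ℝ w) p :=
    (hCA.fderiv_right (m := 1) (by norm_cast)).differentiableAt one_ne_zero
  have hsym := second_derivative_symmetric_of_eventually hev hd.hasFDerivAt
    ((1:ℝ), (0:ℝ)) ((0:ℝ), (1:ℝ))
  -- pdx w agrees with q ↦ fderiv w q (0,1) near p
  have ev_x : pdx w =ᶠ[𝓝 p] fun q => (ContinuousLinearMap.apply ℝ ℝ ((0:ℝ),(1:ℝ))) (fderiv ℝ w q) := by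
    filter_upwards [hUN] with q hq
    have hNq : CBS ∈ 𝓝 q := Filter.mem_of_superset (hopen.mem_nhds hq) hUsub
    simp [pdx, fderivWithin_of_mem_nhds hNq]
  have ev_t : pdt w =ᶠ[𝓝 p] fun q => (ContinuousLinearMap.apply ℝ ℝ ((1:ℝ),(0:ℝ))) (fderiv ℝ w q) := by
    filter_upwards [hUN] with q hq
    have hNq : CBS ∈ 𝓝 q := Filter.mem_of_superset (hopen.mem_nhds hq) hUsub
    simp [pdt, fderivWithin_of_mem_nhds hNq]
  have hx' : HasFDerivAt (pdx w)
      (((ContinuousLinearMap.apply ℝ ℝ ((0:ℝ),(1:ℝ)))).comp (fderiv ℝ (fderiv ℝ w) p)) p :=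
    (((ContinuousLinearMap.apply ℝ ℝ ((0:ℝ),(1:ℝ))).hasFDerivAt).comp p
      hd.hasFDerivAt).congr_of_eventuallyEq ev_x
  have ht' : HasFDerivAt (pdt w)
      (((ContinuousLinearMap.apply ℝ ℝ ((1:ℝ),(0:ℝ)))).comp (fderiv ℝ (fderiv ℝ w) p)) p :=
    (((ContinuousLinearMap.apply ℝ ℝ ((1:ℝ),(0:ℝ))).hasFDerivAt).comp p
      hd.hasFDerivAt).congr_of_eventuallyEq ev_t
  have e1 : pdt (pdx w) p = fderiv ℝ (pdx w) p ((1:ℝ),(0:ℝ)) := by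
    simp [pdt, fderivWithin_of_mem_nhds hN]
  have e2 : pdx (pdt w) p = fderiv ℝ (pdt w) p ((0:ℝ),(1:ℝ)) := by
    simp [pdx, fderivWithin_of_mem_nhds hN]
  rw [e1, e2, hx'.fderiv, ht'.fderiv]
  simpa using hsym

/-- integrals over [0,1] only depend on values on the open interval -/
lemma integral_congr_Ioo {f g : ℝ → ℝ} (h : ∀ x ∈ Ioo (0:ℝ) 1, f x = g x) :
    ∫ x in (0:ℝ)..1, f x = ∫ x in (0:ℝ)..1, g x := by
  apply intervalIntegral.integral_congr_ae
  have h1 : ∀ᵐ (x : ℝ), x ≠ (1:ℝ) := by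
    refine (MeasureTheory.ae_iff).mpr ?_
    simp [Real.volume_singleton]
  filter_upwards [h1] with x hx1 hxI
  rw [Set.uIoc_of_le (by norm_num : (0:ℝ) ≤ 1)] at hxI
  exact h x ⟨hxI.1, lt_of_le_of_ne hxI.2 hx1⟩

/-- Cauchy–Schwarz for interval integrals of continuous functions. -/
lemma integral_CS {f g : ℝ → ℝ} {a b : ℝ} (hab : a ≤ b)
    (hf : ContinuousOn f (Icc a b)) (hg : ContinuousOn g (Icc a b)) :
    (∫ x in a..b, f x * g x) ^ 2 ≤ (∫ x in a..b, f x ^ 2) * ∫ x in a..b, g x ^ 2 := by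
  have hIcc : uIcc a b = Icc a b := uIcc_of_le hab
  have hif : IntervalIntegrable (fun x => f x ^ 2) MeasureTheory.volume a b :=
    ContinuousOn.intervalIntegrable (by rw [hIcc]; exact hf.pow 2)
  have hig : IntervalIntegrable (fun x => g x ^ 2) MeasureTheory.volume a b :=
    ContinuousOn.intervalIntegrable (by rw [hIcc]; exact hg.pow 2)
  have hifg : IntervalIntegrable (fun x => f x * g x) MeasureTheory.volume a b :=
    ContinuousOn.intervalIntegrable (by rw [hIcc]; exact hf.mul hg)
  set A := ∫ x in a..b, f x ^ 2 with hA
  set B := ∫ x in a..b, g x ^ 2 with hB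
  set C := ∫ x in a..b, f x * g x with hC
  have key : ∀ lam : ℝ, 0 ≤ lam ^ 2 * A + 2 * lam * C + B := by
    intro lam
    have h0 : 0 ≤ ∫ x in a..b, (lam * f x + g x) ^ 2 := by
      apply intervalIntegral.integral_nonneg hab
      intro x _; positivity
    have hexp : ∫ x in a..b, (lam * f x + g x) ^ 2
        = lam ^ 2 * A + 2 * lam * C + B := by
      have : ∀ x, (lam * f x + g x) ^ 2
          = lam ^ 2 * f x ^ 2 + 2 * lam * (f x * g x) + g x ^ 2 := by intro x; ring
      rw [intervalIntegral.integral_congr (fun x _ => this x)]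
      rw [intervalIntegral.integral_add ((hif.const_mul _).add (hifg.const_mul _)) hig,
        intervalIntegral.integral_add (hif.const_mul _) (hifg.const_mul _),
        intervalIntegral.integral_const_mul, intervalIntegral.integral_const_mul]
    linarith [hexp ▸ h0]
  have hA0 : 0 ≤ A := intervalIntegral.integral_nonneg hab (fun x _ => by positivity)
  have hB0 : 0 ≤ B := intervalIntegral.integral_nonneg hab (fun x _ => by positivity)
  rcases eq_or_lt_of_le hA0 with hA0' | hA0'
  · -- A = 0 : show C = 0
    have hC0 : C = 0 := by
      by_contra hC0
      have hlam : 2 * (-(B + 1) / (2 * C)) * C = -(B + 1) := by field_simp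
      have hk := key (-(B + 1) / (2 * C))
      rw [hlam, ← hA0'] at hk
      simp at hk
      linarith
    rw [hC0, ← hA0']
    norm_num
  · set D := C / A with hDdef
    have hD : C = D * A := by rw [hDdef, div_mul_cancel₀ _ hA0'.ne']
    have hthis := key (-D)
    rw [hD] at hthis
    have h6 : D ^ 2 * A ≤ B := by nlinarith [hthis]
    have h7 := mul_le_mul_of_nonneg_right h6 hA0
    calc C ^ 2 = (D ^ 2 * A) * A := by rw [hD]; ring
    _ ≤ B * A := h7
    _ = A * B := mul_comm _ _


lemma sq_integral_nonneg {f : ℝ → ℝ} {a b : ℝ} (hab : a ≤ b) :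
    0 ≤ ∫ x in a..b, f x ^ 2 :=
  intervalIntegral.integral_nonneg hab (fun x _ => by positivity)

/-- Agmon-type inequality -/
lemma agmon (hw : ContDiffOn ℝ (⊤:ℕ∞) w CBS) {t : ℝ} (ht : 0 ≤ t) (h0 : w (t, 0) = 0)
    {x : ℝ} (hx : x ∈ Icc (0:ℝ) 1) :
    (w (t, x)) ^ 2 ≤ ∫ y in (0:ℝ)..1, (pdx w (t, y)) ^ 2 := by
  have Cw : ContinuousOn (fun y => w (t, y)) (Icc (0:ℝ) 1) := slice_contOn_x hw.continuousOn ht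
  have Cpx : ContinuousOn (fun y => pdx w (t, y)) (Icc (0:ℝ) 1) :=
    slice_contOn_x (contDiffOn_pdx hw).continuousOn ht
  have hsub : Icc (0:ℝ) x ⊆ Icc (0:ℝ) 1 := Icc_subset_Icc le_rfl hx.2
  have hftc : ∫ y in (0:ℝ)..x, pdx w (t, y) = w (t, x) - w (t, 0) := by
    apply intervalIntegral.integral_eq_sub_of_hasDeriv_right_of_le hx.1 (Cw.mono hsub)
    · intro y hy
      exact (hasDerivAt_slice_x hw ht ⟨hy.1, lt_of_lt_of_le hy.2 hx.2⟩).hasDerivWithinAt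
    · exact ContinuousOn.intervalIntegrable (by rw [uIcc_of_le hx.1]; exact Cpx.mono hsub)
  rw [h0, sub_zero] at hftc
  have hCS : (∫ y in (0:ℝ)..x, pdx w (t, y) * 1) ^ 2
      ≤ (∫ y in (0:ℝ)..x, (pdx w (t, y)) ^ 2) * ∫ y in (0:ℝ)..x, (1:ℝ) ^ 2 :=
    integral_CS hx.1 (Cpx.mono hsub) continuousOn_const
  simp only [mul_one, one_pow] at hCS
  rw [intervalIntegral.integral_const, smul_eq_mul, mul_one, sub_zero] at hCS
  have hmono : (∫ y in (0:ℝ)..x, (pdx w (t, y)) ^ 2) ≤ ∫ y in (0:ℝ)..1, (pdx w (t, y)) ^ 2 := by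
    apply intervalIntegral.integral_mono_interval le_rfl hx.1 hx.2
    · exact Filter.Eventually.of_forall (fun y => by positivity)
    · exact ContinuousOn.intervalIntegrable (by rw [uIcc_of_le (zero_le_one)]; exact Cpx.pow 2)
  have h1 : 0 ≤ ∫ y in (0:ℝ)..x, (pdx w (t, y)) ^ 2 := sq_integral_nonneg hx.1
  nlinarith [hftc ▸ hCS, hx.1, hx.2]

/-- Integration by parts with vanishing boundary term. -/
lemma ibp_zero {f g f' g' : ℝ → ℝ}
    (hfc : ContinuousOn f (Icc (0:ℝ) 1)) (hgc : ContinuousOn g (Icc (0:ℝ) 1))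
    (hf'c : ContinuousOn f' (Icc (0:ℝ) 1)) (hg'c : ContinuousOn g' (Icc (0:ℝ) 1))
    (hf' : ∀ x ∈ Ioo (0:ℝ) 1, HasDerivAt f (f' x) x)
    (hg' : ∀ x ∈ Ioo (0:ℝ) 1, HasDerivAt g (g' x) x)
    (h0 : f 0 * g 0 = 0) (h1 : f 1 * g 1 = 0) :
    ∫ x in (0:ℝ)..1, f' x * g x = - ∫ x in (0:ℝ)..1, f x * g' x := by
  have hIcc : uIcc (0:ℝ) 1 = Icc (0:ℝ) 1 := uIcc_of_le zero_le_one
  have hint1 : IntervalIntegrable (fun x => f' x * g x) MeasureTheory.volume 0 1 :=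
    ContinuousOn.intervalIntegrable (by rw [hIcc]; exact hf'c.mul hgc)
  have hint2 : IntervalIntegrable (fun x => f x * g' x) MeasureTheory.volume 0 1 :=
    ContinuousOn.intervalIntegrable (by rw [hIcc]; exact hfc.mul hg'c)
  have hftc : ∫ x in (0:ℝ)..1, (f' x * g x + f x * g' x) = f 1 * g 1 - f 0 * g 0 := by
    apply intervalIntegral.integral_eq_sub_of_hasDeriv_right_of_le zero_le_one (hfc.mul hgc)
    · intro y hy
      exact ((hf' y hy).mul (hg' y hy)).hasDerivWithinAt
    · exact hint1.add hint2
  rw [intervalIntegral.integral_add hint1 hint2, h0, h1] at hftc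
  linarith


/-- Cauchy-Schwarz with absolute values, giving sqrt bound. -/
lemma cs_abs {f g : ℝ → ℝ} (hf : ContinuousOn f (Icc (0:ℝ) 1))
    (hg : ContinuousOn g (Icc (0:ℝ) 1)) :
    ∫ x in (0:ℝ)..1, |f x| * |g x|
      ≤ Real.sqrt (∫ x in (0:ℝ)..1, f x ^ 2) * Real.sqrt (∫ x in (0:ℝ)..1, g x ^ 2) := by
  have hX0 : 0 ≤ ∫ x in (0:ℝ)..1, |f x| * |g x| :=
    intervalIntegral.integral_nonneg zero_le_one (fun x _ => by positivity)
  have hCS := integral_CS zero_le_one hf.abs hg.abs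
  have e1 : ∫ x in (0:ℝ)..1, |f x| ^ 2 = ∫ x in (0:ℝ)..1, f x ^ 2 :=
    intervalIntegral.integral_congr (fun x _ => sq_abs (f x))
  have e2 : ∫ x in (0:ℝ)..1, |g x| ^ 2 = ∫ x in (0:ℝ)..1, g x ^ 2 :=
    intervalIntegral.integral_congr (fun x _ => sq_abs (g x))
  rw [e1, e2] at hCS
  have hF0 : 0 ≤ ∫ x in (0:ℝ)..1, f x ^ 2 := sq_integral_nonneg zero_le_one
  have hG0 : 0 ≤ ∫ x in (0:ℝ)..1, g x ^ 2 := sq_integral_nonneg zero_le_one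
  set X := ∫ x in (0:ℝ)..1, |f x| * |g x|
  set F := ∫ x in (0:ℝ)..1, f x ^ 2
  set G := ∫ x in (0:ℝ)..1, g x ^ 2
  have hY0 : 0 ≤ Real.sqrt F * Real.sqrt G := mul_nonneg (Real.sqrt_nonneg _) (Real.sqrt_nonneg _)
  have hY2 : (Real.sqrt F * Real.sqrt G) ^ 2 = F * G := by
    rw [mul_pow, Real.sq_sqrt hF0, Real.sq_sqrt hG0]
  nlinarith [hCS, hX0, hY0, hY2, sq_nonneg (X - Real.sqrt F * Real.sqrt G),
    sq_nonneg (X + Real.sqrt F * Real.sqrt G)]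

/-- key algebraic (Young) combination -/
lemma young_combine {A B p q K : ℝ} (hA : 0 ≤ A) (hB : 0 ≤ B) (hp : 0 ≤ p) (hq : 0 ≤ q)
    (hK : 0 ≤ K) (hpA : p ≤ A) (hqB : q ≤ B) :
    -A^2 - B^2 + p^2*A + q^2*B + 2*K*p*q*A + 2*K*p*q*B
      ≤ -((p^2+q^2)/2) + (2+4*K^2)*(p^2+q^2)^2 := by
  nlinarith [sq_nonneg (A - 4*p^2), sq_nonneg (B - 4*q^2), sq_nonneg (A - 8*K*p*q),
    sq_nonneg (B - 8*K*p*q), mul_nonneg (mul_nonneg hK hK) (sq_nonneg (p^2 - q^2)),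
    mul_nonneg (sub_nonneg.2 hpA) (add_nonneg hA hp),
    mul_nonneg (sub_nonneg.2 hqB) (add_nonneg hB hq), sq_nonneg A, sq_nonneg B,
    mul_nonneg (mul_nonneg hp hq) hK, sq_nonneg (p*q), sq_nonneg (p+q)]

/-- the numeric inequality `(8 + 16 K²) J₊ < 1`. -/
lemma numeric_Jplus {K c Jplus : ℝ} (hK : 0 < K) (hc : c = 36000 * K ^ 4)
    (hJ : Jplus = (-20 + Real.sqrt (400 + c)) / c) :
    (8 + 16 * K ^ 2) * Jplus < 1 ∧ 0 < Jplus := by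
  have hc0 : 0 < c := by rw [hc]; positivity
  set s := Real.sqrt (400 + c) with hs
  have hs0 : 0 ≤ s := Real.sqrt_nonneg _
  have hs2 : s ^ 2 = 400 + c := Real.sq_sqrt (by linarith)
  have h20 : 20 < s := by nlinarith
  have hs16 : 16 * K ^ 2 - 12 < s := by nlinarith [sq_nonneg K, sq_nonneg (K^2)]
  constructor
  · rw [hJ, mul_div_assoc']
    rw [div_lt_one hc0]
    nlinarith [mul_pos (show (0:ℝ) < s - 20 by linarith)
      (show (0:ℝ) < s + 20 - (8 + 16*K^2) by nlinarith)]
  · rw [hJ]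
    apply div_pos (by linarith) hc0

/-- vanishing time derivative on the lateral boundary -/
lemma pdt_boundary_zero (hw : ContDiffOn ℝ (⊤:ℕ∞) w CBS) {t x : ℝ} (ht : 0 < t)
    (hx : x ∈ Icc (0:ℝ) 1) (hzero : ∀ s ≥ (0:ℝ), w (s, x) = 0) : pdt w (t, x) = 0 := by
  have h1 : HasDerivAt (fun s => w (s, x)) (pdt w (t, x)) t := hasDerivAt_slice_t hw ht hx
  have h2 : HasDerivAt (fun s => w (s, x)) 0 t := by
    apply (hasDerivAt_const t (0:ℝ)).congr_of_eventuallyEq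
    filter_upwards [Ioi_mem_nhds ht] with s hs
    exact hzero s (le_of_lt hs)
  exact h1.unique h2

/-- clean form of the PDE at interior points -/
lemma pde_clean {w₁ w₂ w₃ : ℝ × ℝ → ℝ} {coef : ℝ}
    (hw₁ : ContDiffOn ℝ (⊤:ℕ∞) w₁ CBS) (hw₂ : ContDiffOn ℝ (⊤:ℕ∞) w₂ CBS)
    (hw₃ : ContDiffOn ℝ (⊤:ℕ∞) w₃ CBS)
    (heq : ∀ t ≥ (0:ℝ), ∀ x ∈ Icc (0:ℝ) 1,
      deriv (fun s => w₁ (s, x)) t =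
        deriv (deriv (fun y => w₁ (t, y))) x - w₁ (t, x) * deriv (fun y => w₁ (t, y)) x
          - coef * deriv (fun y => w₂ (t, y) * w₃ (t, y)) x)
    {t x : ℝ} (ht : 0 < t) (hx : x ∈ Ioo (0:ℝ) 1) :
    pdt w₁ (t, x) = pdx (pdx w₁) (t, x) - w₁ (t, x) * pdx w₁ (t, x)
      - coef * (pdx w₂ (t, x) * w₃ (t, x) + w₂ (t, x) * pdx w₃ (t, x)) := by
  have hIcc := Ioo_subset_Icc_self hx
  have e1 : deriv (fun s => w₁ (s, x)) t = pdt w₁ (t, x) :=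
    (hasDerivAt_slice_t hw₁ ht hIcc).deriv
  have e2 : deriv (fun y => w₁ (t, y)) x = pdx w₁ (t, x) :=
    (hasDerivAt_slice_x hw₁ ht.le hx).deriv
  have e3 : deriv (deriv (fun y => w₁ (t, y))) x = pdx (pdx w₁) (t, x) := by
    have hev : deriv (fun y => w₁ (t, y)) =ᶠ[𝓝 x] fun y => pdx w₁ (t, y) := by
      filter_upwards [Ioo_mem_nhds hx.1 hx.2] with y hy
      exact (hasDerivAt_slice_x hw₁ ht.le hy).deriv
    rw [hev.deriv_eq]
    exact (hasDerivAt_slice_x (contDiffOn_pdx hw₁) ht.le hx).deriv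
  have e4 : deriv (fun y => w₂ (t, y) * w₃ (t, y)) x
      = pdx w₂ (t, x) * w₃ (t, x) + w₂ (t, x) * pdx w₃ (t, x) :=
    ((hasDerivAt_slice_x hw₂ ht.le hx).mul (hasDerivAt_slice_x hw₃ ht.le hx)).deriv
  have := heq t ht.le x hIcc
  rw [e1, e2, e3, e4] at this
  exact this


lemma ae_Ioo : ∀ᵐ (x : ℝ), x ∈ Set.uIoc (0:ℝ) 1 → x ∈ Ioo (0:ℝ) 1 := by
  have h1 : ∀ᵐ (x : ℝ), x ≠ (1:ℝ) := by
    refine (MeasureTheory.ae_iff).mpr ?_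
    simp [Real.volume_singleton]
  filter_upwards [h1] with x hx1 hxI
  rw [Set.uIoc_of_le (by norm_num : (0:ℝ) ≤ 1)] at hxI
  exact ⟨hxI.1, lt_of_le_of_ne hxI.2 hx1⟩

section Main

variable {u v : ℝ × ℝ → ℝ}

lemma contOn_F (hu : ContDiffOn ℝ (⊤:ℕ∞) u CBS) (hv : ContDiffOn ℝ (⊤:ℕ∞) v CBS)
    {s : ℝ} (hs : 0 ≤ s) :
    ContinuousOn (fun x => ((1:ℝ)/2) * ((pdx u (s,x))^2 + (pdx v (s,x))^2)) (Icc (0:ℝ) 1) := by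
  have h1 := slice_contOn_x (contDiffOn_pdx hu).continuousOn hs
  have h2 := slice_contOn_x (contDiffOn_pdx hv).continuousOn hs
  exact continuousOn_const.mul ((h1.pow 2).add (h2.pow 2))

lemma hasDerivAt_J (hu : ContDiffOn ℝ (⊤:ℕ∞) u CBS) (hv : ContDiffOn ℝ (⊤:ℕ∞) v CBS)
    {t : ℝ} (ht : 0 < t) :
    HasDerivAt (fun s => ∫ x in (0:ℝ)..1, ((1:ℝ)/2) * ((pdx u (s,x))^2 + (pdx v (s,x))^2))
      (∫ x in (0:ℝ)..1,
        (pdx u (t,x) * pdt (pdx u) (t,x) + pdx v (t,x) * pdt (pdx v) (t,x))) t := by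
  have hux := contDiffOn_pdx hu
  have hvx := contDiffOn_pdx hv
  have huxt := contDiffOn_pdt hux
  have hvxt := contDiffOn_pdt hvx
  have hIoc : Set.uIoc (0:ℝ) 1 = Ioc (0:ℝ) 1 := Set.uIoc_of_le zero_le_one
  have hball : Metric.ball t (t/2) ⊆ Ioi (0:ℝ) := by
    intro s hs
    rw [Metric.mem_ball, Real.dist_eq, abs_lt] at hs
    have : t/2 < s := by linarith [hs.1]
    exact lt_trans (by linarith) this
  have hballle : ∀ s ∈ Metric.ball t (t/2), s ∈ Icc (t/2) (3*t/2) := by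
    intro s hs
    rw [Metric.mem_ball, Real.dist_eq, abs_lt] at hs
    constructor <;> linarith [hs.1, hs.2]
  -- compact bound for the derivative integrand
  have hKcomp : IsCompact ((Icc (t/2) (3*t/2)) ×ˢ (Icc (0:ℝ) 1)) :=
    isCompact_Icc.prod isCompact_Icc
  have hKsub : ((Icc (t/2) (3*t/2)) ×ˢ (Icc (0:ℝ) 1)) ⊆ CBS := by
    apply Set.prod_mono _ le_rfl
    exact Icc_subset_Ici_self.trans (Ici_subset_Ici.mpr (by linarith))
  have hGcont : ContinuousOn
      (fun p => |pdx u p * pdt (pdx u) p| + |pdx v p * pdt (pdx v) p|) CBS :=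
    ((hux.continuousOn.mul huxt.continuousOn).abs).add
      ((hvx.continuousOn.mul hvxt.continuousOn).abs)
  obtain ⟨M, hM⟩ := hKcomp.exists_bound_of_continuousOn (hGcont.mono hKsub)
  have key := intervalIntegral.hasDerivAt_integral_of_dominated_loc_of_deriv_le
    (F := fun s x => ((1:ℝ)/2) * ((pdx u (s,x))^2 + (pdx v (s,x))^2))
    (F' := fun s x => (pdx u (s,x) * pdt (pdx u) (s,x) + pdx v (s,x) * pdt (pdx v) (s,x)))
    (x₀ := t) (a := 0) (b := 1) (bound := fun _ => M) (s := Metric.ball t (t/2)) (μ := MeasureTheory.volume)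
    (Metric.ball_mem_nhds t (by positivity))
    ?hFmeas ?hFint ?hF'meas ?hbound ?hbint ?hdiff
  · exact key.2
  case hFmeas =>
    filter_upwards [Metric.ball_mem_nhds t (by positivity : (0:ℝ) < t/2)] with s hs
    rw [hIoc]
    exact ((contOn_F hu hv (le_of_lt (hball hs))).mono Ioc_subset_Icc_self
      ).aestronglyMeasurable measurableSet_Ioc
  case hFint =>
    exact ContinuousOn.intervalIntegrable
      (by rw [uIcc_of_le zero_le_one]; exact contOn_F hu hv ht.le)
  case hF'meas =>
    rw [hIoc]
    have hc : ContinuousOn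
        (fun x => pdx u (t,x) * pdt (pdx u) (t,x) + pdx v (t,x) * pdt (pdx v) (t,x))
        (Icc (0:ℝ) 1) := by
      have c1 := slice_contOn_x hux.continuousOn ht.le
      have c2 := slice_contOn_x huxt.continuousOn ht.le
      have c3 := slice_contOn_x hvx.continuousOn ht.le
      have c4 := slice_contOn_x hvxt.continuousOn ht.le
      exact (c1.mul c2).add (c3.mul c4)
    exact (hc.mono Ioc_subset_Icc_self).aestronglyMeasurable measurableSet_Ioc
  case hbound =>
    filter_upwards [ae_Ioo] with x hx hxI s hs
    have hxIoo := hx hxI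
    have hmem : ((s, x) : ℝ × ℝ) ∈ (Icc (t/2) (3*t/2)) ×ˢ (Icc (0:ℝ) 1) :=
      ⟨hballle s hs, Ioo_subset_Icc_self hxIoo⟩
    have := hM _ hmem
    rw [Real.norm_eq_abs] at this ⊢
    have habs : |pdx u (s,x) * pdt (pdx u) (s,x) + pdx v (s,x) * pdt (pdx v) (s,x)|
        ≤ |pdx u (s,x) * pdt (pdx u) (s,x)| + |pdx v (s,x) * pdt (pdx v) (s,x)| :=
      abs_add_le _ _
    calc |pdx u (s,x) * pdt (pdx u) (s,x) + pdx v (s,x) * pdt (pdx v) (s,x)|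
        ≤ |pdx u (s,x) * pdt (pdx u) (s,x)| + |pdx v (s,x) * pdt (pdx v) (s,x)| := habs
      _ ≤ |(|pdx u ((s,x):ℝ×ℝ) * pdt (pdx u) ((s,x):ℝ×ℝ)| + |pdx v ((s,x):ℝ×ℝ) * pdt (pdx v) ((s,x):ℝ×ℝ)|)| := le_abs_self _
      _ ≤ M := this
  case hbint => exact intervalIntegrable_const
  case hdiff =>
    filter_upwards [ae_Ioo] with x hx hxI s hs
    have hxIoo := hx hxI
    have hs0 : 0 < s := hball hs
    have hdu : HasDerivAt (fun s => pdx u (s,x)) (pdt (pdx u) (s,x)) s :=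
      hasDerivAt_slice_t hux hs0 (Ioo_subset_Icc_self hxIoo)
    have hdv : HasDerivAt (fun s => pdx v (s,x)) (pdt (pdx v) (s,x)) s :=
      hasDerivAt_slice_t hvx hs0 (Ioo_subset_Icc_self hxIoo)
    have := ((hdu.fun_pow 2).add (hdv.fun_pow 2)).const_mul ((1:ℝ)/2)
    refine this.congr_deriv ?_
    push_cast
    ring

lemma contJ (hu : ContDiffOn ℝ (⊤:ℕ∞) u CBS) (hv : ContDiffOn ℝ (⊤:ℕ∞) v CBS) :
    ContinuousOn (fun s => ∫ x in (0:ℝ)..1, ((1:ℝ)/2) * ((pdx u (s,x))^2 + (pdx v (s,x))^2))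
      (Ici (0:ℝ)) := by
  intro t₀ ht₀
  have hux := contDiffOn_pdx hu
  have hvx := contDiffOn_pdx hv
  simp only [intervalIntegral.integral_of_le zero_le_one]
  have hKcomp : IsCompact ((Icc (0:ℝ) (t₀+1)) ×ˢ (Icc (0:ℝ) 1)) :=
    isCompact_Icc.prod isCompact_Icc
  have hKsub : ((Icc (0:ℝ) (t₀+1)) ×ˢ (Icc (0:ℝ) 1)) ⊆ CBS :=
    Set.prod_mono Icc_subset_Ici_self le_rfl
  have hGcont : ContinuousOn (fun p => ((1:ℝ)/2) * ((pdx u p)^2 + (pdx v p)^2)) CBS :=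
    continuousOn_const.mul (((hux.continuousOn).pow 2).add ((hvx.continuousOn).pow 2))
  obtain ⟨M, hM⟩ := hKcomp.exists_bound_of_continuousOn (hGcont.mono hKsub)
  apply MeasureTheory.continuousWithinAt_of_dominated (bound := fun _ => M)
  · filter_upwards [self_mem_nhdsWithin] with s hs
    exact ((contOn_F hu hv hs).mono Ioc_subset_Icc_self).aestronglyMeasurable measurableSet_Ioc
  · have hev : Icc (0:ℝ) (t₀+1) ∈ 𝓝[Ici 0] t₀ := by
      apply Filter.mem_of_superset
        (Filter.inter_mem self_mem_nhdsWithin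
          (nhdsWithin_le_nhds (Iio_mem_nhds (lt_add_one t₀))))
      rintro s ⟨hs1, hs2⟩
      exact ⟨hs1, le_of_lt hs2⟩
    filter_upwards [hev] with s hs
    filter_upwards [MeasureTheory.ae_restrict_mem measurableSet_Ioc] with x hx
    have hmem : ((s, x) : ℝ × ℝ) ∈ (Icc (0:ℝ) (t₀+1)) ×ˢ (Icc (0:ℝ) 1) :=
      ⟨hs, Ioc_subset_Icc_self hx⟩
    exact hM _ hmem
  · rw [MeasureTheory.integrable_const_iff]
    right
    exact isFiniteMeasure_restrict.mpr (by simp [Real.volume_Ioc])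
  · filter_upwards [MeasureTheory.ae_restrict_mem measurableSet_Ioc] with x hx
    have hxI : x ∈ Icc (0:ℝ) 1 := Ioc_subset_Icc_self hx
    have hcu : ContinuousWithinAt (fun s => pdx u (s,x)) (Ici 0) t₀ := by
      have hmap : Set.MapsTo (fun s => ((s, x) : ℝ × ℝ)) (Ici 0) CBS :=
        fun s hs => CBS_mem hs hxI
      exact (hux.continuousOn.comp
        ((continuous_id.prodMk continuous_const).continuousOn) hmap) t₀ ht₀
    have hcv : ContinuousWithinAt (fun s => pdx v (s,x)) (Ici 0) t₀ := by
      have hmap : Set.MapsTo (fun s => ((s, x) : ℝ × ℝ)) (Ici 0) CBS :=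
        fun s hs => CBS_mem hs hxI
      exact (hvx.continuousOn.comp
        ((continuous_id.prodMk continuous_const).continuousOn) hmap) t₀ ht₀
    exact (continuousWithinAt_const.mul ((hcu.pow 2).add (hcv.pow 2)))


lemma abs_le_sqrt_int {w : ℝ × ℝ → ℝ} (hw : ContDiffOn ℝ (⊤:ℕ∞) w CBS) {t : ℝ} (ht : 0 ≤ t)
    (h0 : w (t, 0) = 0) {x : ℝ} (hx : x ∈ Icc (0:ℝ) 1) :
    |w (t, x)| ≤ Real.sqrt (∫ y in (0:ℝ)..1, (pdx w (t, y)) ^ 2) := by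
  have h := agmon hw ht h0 hx
  calc |w (t, x)| = Real.sqrt ((w (t,x))^2) := (Real.sqrt_sq_eq_abs _).symm
  _ ≤ _ := Real.sqrt_le_sqrt h

lemma poincare_step {w : ℝ × ℝ → ℝ} (hw : ContDiffOn ℝ (⊤:ℕ∞) w CBS) {t : ℝ} (ht : 0 ≤ t)
    (hb0 : w (t, 0) = 0) (hb1 : w (t, 1) = 0) :
    Real.sqrt (∫ x in (0:ℝ)..1, (pdx w (t,x))^2)
      ≤ Real.sqrt (∫ x in (0:ℝ)..1, (pdx (pdx w) (t,x))^2) := by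
  have hwx := contDiffOn_pdx hw
  have hwxx := contDiffOn_pdx hwx
  have cw := slice_contOn_x hw.continuousOn ht
  have cwx := slice_contOn_x hwx.continuousOn ht
  have cwxx := slice_contOn_x hwxx.continuousOn ht
  set P := ∫ x in (0:ℝ)..1, (pdx w (t,x))^2 with hP
  set A2 := ∫ x in (0:ℝ)..1, (pdx (pdx w) (t,x))^2 with hA2
  have hP0 : 0 ≤ P := sq_integral_nonneg zero_le_one
  have hA20 : 0 ≤ A2 := sq_integral_nonneg zero_le_one
  -- IBP : ∫ (pdx w)^2 = -∫ w * pdx (pdx w)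
  have hibp : ∫ x in (0:ℝ)..1, pdx w (t,x) * pdx w (t,x)
      = - ∫ x in (0:ℝ)..1, w (t,x) * pdx (pdx w) (t,x) := by
    apply ibp_zero cw cwx cwx cwxx
    · exact fun x hx => hasDerivAt_slice_x hw ht hx
    · exact fun x hx => hasDerivAt_slice_x hwx ht hx
    · rw [hb0]; ring
    · rw [hb1]; ring
  have hPeq : P = - ∫ x in (0:ℝ)..1, w (t,x) * pdx (pdx w) (t,x) := by
    rw [hP, ← hibp]
    exact intervalIntegral.integral_congr (fun x _ => sq _)
  -- bound : P ≤ √P * √A2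
  have habs : - ∫ x in (0:ℝ)..1, w (t,x) * pdx (pdx w) (t,x)
      ≤ ∫ x in (0:ℝ)..1, |w (t,x)| * |pdx (pdx w) (t,x)| := by
    have h1 : |∫ x in (0:ℝ)..1, w (t,x) * pdx (pdx w) (t,x)|
        ≤ ∫ x in (0:ℝ)..1, |w (t,x) * pdx (pdx w) (t,x)| :=
      intervalIntegral.abs_integral_le_integral_abs zero_le_one
    have h2 : ∫ x in (0:ℝ)..1, |w (t,x) * pdx (pdx w) (t,x)|
        = ∫ x in (0:ℝ)..1, |w (t,x)| * |pdx (pdx w) (t,x)| :=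
      intervalIntegral.integral_congr (fun x _ => abs_mul _ _)
    calc - ∫ x in (0:ℝ)..1, w (t,x) * pdx (pdx w) (t,x)
        ≤ |∫ x in (0:ℝ)..1, w (t,x) * pdx (pdx w) (t,x)| := neg_le_abs _
      _ ≤ _ := h2 ▸ h1
  have hIcc : uIcc (0:ℝ) 1 = Icc (0:ℝ) 1 := uIcc_of_le zero_le_one
  have hmono : ∫ x in (0:ℝ)..1, |w (t,x)| * |pdx (pdx w) (t,x)|
      ≤ ∫ x in (0:ℝ)..1, Real.sqrt P * |pdx (pdx w) (t,x)| := by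
    apply intervalIntegral.integral_mono_on zero_le_one
    · exact ContinuousOn.intervalIntegrable (by rw [hIcc]; exact cw.abs.mul cwxx.abs)
    · exact ContinuousOn.intervalIntegrable
        (by rw [hIcc]; exact continuousOn_const.mul cwxx.abs)
    · intro x hx
      exact mul_le_mul_of_nonneg_right (abs_le_sqrt_int hw ht hb0 hx) (abs_nonneg _)
  have hconst : ∫ x in (0:ℝ)..1, Real.sqrt P * |pdx (pdx w) (t,x)|
      = Real.sqrt P * ∫ x in (0:ℝ)..1, |pdx (pdx w) (t,x)| :=
    intervalIntegral.integral_const_mul _ _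
  have hcs : ∫ x in (0:ℝ)..1, |pdx (pdx w) (t,x)| ≤ Real.sqrt A2 := by
    have h := cs_abs (f := fun x => pdx (pdx w) (t,x)) (g := fun _ => (1:ℝ)) cwxx
      continuousOn_const
    simp only [abs_one, mul_one, one_pow] at h
    rw [intervalIntegral.integral_const, smul_eq_mul] at h
    simpa using h
  have hPA : P ≤ Real.sqrt P * Real.sqrt A2 := by
    calc P ≤ ∫ x in (0:ℝ)..1, |w (t,x)| * |pdx (pdx w) (t,x)| := hPeq ▸ habs
    _ ≤ Real.sqrt P * ∫ x in (0:ℝ)..1, |pdx (pdx w) (t,x)| := hconst ▸ hmono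
    _ ≤ Real.sqrt P * Real.sqrt A2 :=
        mul_le_mul_of_nonneg_left hcs (Real.sqrt_nonneg _)
  have hsp := Real.sq_sqrt hP0
  by_cases hz : Real.sqrt P = 0
  · rw [hz]; exact Real.sqrt_nonneg _
  · have hzpos : 0 < Real.sqrt P := lt_of_le_of_ne (Real.sqrt_nonneg _) (Ne.symm hz)
    nlinarith [Real.sqrt_nonneg A2]

lemma side_est {w₁ w₂ w₃ : ℝ × ℝ → ℝ} {coef : ℝ}
    (hw₁ : ContDiffOn ℝ (⊤:ℕ∞) w₁ CBS) (hw₂ : ContDiffOn ℝ (⊤:ℕ∞) w₂ CBS)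
    (hw₃ : ContDiffOn ℝ (⊤:ℕ∞) w₃ CBS)
    (heq : ∀ t ≥ (0:ℝ), ∀ x ∈ Icc (0:ℝ) 1,
      deriv (fun s => w₁ (s, x)) t =
        deriv (deriv (fun y => w₁ (t, y))) x - w₁ (t, x) * deriv (fun y => w₁ (t, y)) x
          - coef * deriv (fun y => w₂ (t, y) * w₃ (t, y)) x)
    (hz₁ : ∀ s ≥ (0:ℝ), w₁ (s, 0) = 0) (hz₁' : ∀ s ≥ (0:ℝ), w₁ (s, 1) = 0)
    {t : ℝ} (ht : 0 < t)
    (hz2 : w₂ (t, 0) = 0) (hz3 : w₃ (t, 0) = 0) :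
    ∫ x in (0:ℝ)..1, pdx w₁ (t,x) * pdt (pdx w₁) (t,x)
      ≤ -(∫ x in (0:ℝ)..1, (pdx (pdx w₁) (t,x))^2)
        + ((Real.sqrt (∫ x in (0:ℝ)..1, (pdx w₁ (t,x))^2))^2
           + 2*|coef| * (Real.sqrt (∫ x in (0:ℝ)..1, (pdx w₂ (t,x))^2)
               * Real.sqrt (∫ x in (0:ℝ)..1, (pdx w₃ (t,x))^2)))
          * Real.sqrt (∫ x in (0:ℝ)..1, (pdx (pdx w₁) (t,x))^2) := by
  have hw₁x := contDiffOn_pdx hw₁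
  have hw₁xx := contDiffOn_pdx hw₁x
  have hw₁t := contDiffOn_pdt hw₁
  have hw₁tx := contDiffOn_pdx hw₁t
  have c1 := slice_contOn_x hw₁.continuousOn ht.le
  have c1x := slice_contOn_x hw₁x.continuousOn ht.le
  have c1xx := slice_contOn_x hw₁xx.continuousOn ht.le
  have c1t := slice_contOn_x hw₁t.continuousOn ht.le
  have c1tx := slice_contOn_x hw₁tx.continuousOn ht.le
  have c2 := slice_contOn_x hw₂.continuousOn ht.le
  have c2x := slice_contOn_x (contDiffOn_pdx hw₂).continuousOn ht.le
  have c3 := slice_contOn_x hw₃.continuousOn ht.le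
  have c3x := slice_contOn_x (contDiffOn_pdx hw₃).continuousOn ht.le
  have hIcc : uIcc (0:ℝ) 1 = Icc (0:ℝ) 1 := uIcc_of_le zero_le_one
  set p1 := Real.sqrt (∫ x in (0:ℝ)..1, (pdx w₁ (t,x))^2) with hp1
  set p2 := Real.sqrt (∫ x in (0:ℝ)..1, (pdx w₂ (t,x))^2) with hp2
  set p3 := Real.sqrt (∫ x in (0:ℝ)..1, (pdx w₃ (t,x))^2) with hp3
  set A1 := Real.sqrt (∫ x in (0:ℝ)..1, (pdx (pdx w₁) (t,x))^2) with hA1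
  -- step 1 : symmetry of mixed partials
  have e1 : ∫ x in (0:ℝ)..1, pdx w₁ (t,x) * pdt (pdx w₁) (t,x)
      = ∫ x in (0:ℝ)..1, pdx (pdt w₁) (t,x) * pdx w₁ (t,x) := by
    apply integral_congr_Ioo
    intro x hx
    rw [pdt_pdx_symm hw₁ ht hx, mul_comm]
  -- step 2 : integration by parts
  have e2 : ∫ x in (0:ℝ)..1, pdx (pdt w₁) (t,x) * pdx w₁ (t,x)
      = - ∫ x in (0:ℝ)..1, pdt w₁ (t,x) * pdx (pdx w₁) (t,x) := by
    apply ibp_zero c1t c1x c1tx c1xx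
    · exact fun x hx => hasDerivAt_slice_x hw₁t ht.le hx
    · exact fun x hx => hasDerivAt_slice_x hw₁x ht.le hx
    · rw [pdt_boundary_zero hw₁ ht (by norm_num) hz₁]; ring
    · rw [pdt_boundary_zero hw₁ ht (by norm_num) hz₁']; ring
  -- step 3 : substitute the PDE
  have e3 : ∫ x in (0:ℝ)..1, pdt w₁ (t,x) * pdx (pdx w₁) (t,x)
      = ∫ x in (0:ℝ)..1, (pdx (pdx w₁) (t,x)
          - (w₁ (t,x) * pdx w₁ (t,x)
            + coef * (pdx w₂ (t,x) * w₃ (t,x) + w₂ (t,x) * pdx w₃ (t,x))))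
          * pdx (pdx w₁) (t,x) := by
    apply integral_congr_Ioo
    intro x hx
    rw [pde_clean hw₁ hw₂ hw₃ heq ht hx]
    ring
  -- expand
  have hhcont : ContinuousOn (fun x => w₁ (t,x) * pdx w₁ (t,x)
      + coef * (pdx w₂ (t,x) * w₃ (t,x) + w₂ (t,x) * pdx w₃ (t,x))) (Icc (0:ℝ) 1) :=
    (c1.mul c1x).add (continuousOn_const.mul ((c2x.mul c3).add (c2.mul c3x)))
  have hint1 : IntervalIntegrable (fun x => (pdx (pdx w₁) (t,x))^2) MeasureTheory.volume 0 1 :=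
    ContinuousOn.intervalIntegrable (by rw [hIcc]; exact c1xx.pow 2)
  have hint2 : IntervalIntegrable (fun x => (w₁ (t,x) * pdx w₁ (t,x)
      + coef * (pdx w₂ (t,x) * w₃ (t,x) + w₂ (t,x) * pdx w₃ (t,x))) * pdx (pdx w₁) (t,x))
      MeasureTheory.volume 0 1 :=
    ContinuousOn.intervalIntegrable (by rw [hIcc]; exact hhcont.mul c1xx)
  have e4 : - ∫ x in (0:ℝ)..1, (pdx (pdx w₁) (t,x)
        - (w₁ (t,x) * pdx w₁ (t,x)
          + coef * (pdx w₂ (t,x) * w₃ (t,x) + w₂ (t,x) * pdx w₃ (t,x))))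
        * pdx (pdx w₁) (t,x)
      = - (∫ x in (0:ℝ)..1, (pdx (pdx w₁) (t,x))^2)
        + ∫ x in (0:ℝ)..1, (w₁ (t,x) * pdx w₁ (t,x)
          + coef * (pdx w₂ (t,x) * w₃ (t,x) + w₂ (t,x) * pdx w₃ (t,x)))
          * pdx (pdx w₁) (t,x) := by
    have : ∫ x in (0:ℝ)..1, (pdx (pdx w₁) (t,x)
        - (w₁ (t,x) * pdx w₁ (t,x)
          + coef * (pdx w₂ (t,x) * w₃ (t,x) + w₂ (t,x) * pdx w₃ (t,x))))
        * pdx (pdx w₁) (t,x)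
        = (∫ x in (0:ℝ)..1, (pdx (pdx w₁) (t,x))^2)
          - ∫ x in (0:ℝ)..1, (w₁ (t,x) * pdx w₁ (t,x)
            + coef * (pdx w₂ (t,x) * w₃ (t,x) + w₂ (t,x) * pdx w₃ (t,x)))
            * pdx (pdx w₁) (t,x) := by
      rw [← intervalIntegral.integral_sub hint1 hint2]
      apply intervalIntegral.integral_congr
      intro x _
      ring
    rw [this]
    ring
  -- step 4 : bound the trilinear term
  have key : ∫ x in (0:ℝ)..1, (w₁ (t,x) * pdx w₁ (t,x)
        + coef * (pdx w₂ (t,x) * w₃ (t,x) + w₂ (t,x) * pdx w₃ (t,x)))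
        * pdx (pdx w₁) (t,x)
      ≤ (p1^2 + 2*|coef| * (p2 * p3)) * A1 := by
    have hb1 : ∀ x ∈ Icc (0:ℝ) 1, |w₁ (t,x)| ≤ p1 :=
      fun x hx => abs_le_sqrt_int hw₁ ht.le (hz₁ t ht.le) hx
    have hb2 : ∀ x ∈ Icc (0:ℝ) 1, |w₂ (t,x)| ≤ p2 :=
      fun x hx => abs_le_sqrt_int hw₂ ht.le hz2 hx
    have hb3 : ∀ x ∈ Icc (0:ℝ) 1, |w₃ (t,x)| ≤ p3 :=
      fun x hx => abs_le_sqrt_int hw₃ ht.le hz3 hx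
    have hmono : ∫ x in (0:ℝ)..1, (w₁ (t,x) * pdx w₁ (t,x)
          + coef * (pdx w₂ (t,x) * w₃ (t,x) + w₂ (t,x) * pdx w₃ (t,x)))
          * pdx (pdx w₁) (t,x)
        ≤ ∫ x in (0:ℝ)..1, (p1 * (|pdx w₁ (t,x)| * |pdx (pdx w₁) (t,x)|)
            + (|coef| * p3) * (|pdx w₂ (t,x)| * |pdx (pdx w₁) (t,x)|)
            + (|coef| * p2) * (|pdx w₃ (t,x)| * |pdx (pdx w₁) (t,x)|)) := by
      apply intervalIntegral.integral_mono_on zero_le_one hint2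
      · apply ContinuousOn.intervalIntegrable
        rw [hIcc]
        exact ((continuousOn_const.mul (c1x.abs.mul c1xx.abs)).add
          (continuousOn_const.mul (c2x.abs.mul c1xx.abs))).add
          (continuousOn_const.mul (c3x.abs.mul c1xx.abs))
      · intro x hx
        have t1 : (w₁ (t,x) * pdx w₁ (t,x)
              + coef * (pdx w₂ (t,x) * w₃ (t,x) + w₂ (t,x) * pdx w₃ (t,x)))
              * pdx (pdx w₁) (t,x)
            ≤ |w₁ (t,x) * pdx w₁ (t,x)
              + coef * (pdx w₂ (t,x) * w₃ (t,x) + w₂ (t,x) * pdx w₃ (t,x))|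
              * |pdx (pdx w₁) (t,x)| := by
          rw [← abs_mul]
          exact le_abs_self _
        have t2 : |w₁ (t,x) * pdx w₁ (t,x)
              + coef * (pdx w₂ (t,x) * w₃ (t,x) + w₂ (t,x) * pdx w₃ (t,x))|
            ≤ p1 * |pdx w₁ (t,x)| + |coef| * (p3 * |pdx w₂ (t,x)| + p2 * |pdx w₃ (t,x)|) := by
          calc |w₁ (t,x) * pdx w₁ (t,x)
              + coef * (pdx w₂ (t,x) * w₃ (t,x) + w₂ (t,x) * pdx w₃ (t,x))|
              ≤ |w₁ (t,x) * pdx w₁ (t,x)|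
                + |coef * (pdx w₂ (t,x) * w₃ (t,x) + w₂ (t,x) * pdx w₃ (t,x))| := abs_add_le _ _
            _ ≤ |w₁ (t,x)| * |pdx w₁ (t,x)|
                + |coef| * (|pdx w₂ (t,x)| * |w₃ (t,x)| + |w₂ (t,x)| * |pdx w₃ (t,x)|) := by
                rw [abs_mul, abs_mul]
                gcongr
                calc |pdx w₂ (t,x) * w₃ (t,x) + w₂ (t,x) * pdx w₃ (t,x)|
                    ≤ |pdx w₂ (t,x) * w₃ (t,x)| + |w₂ (t,x) * pdx w₃ (t,x)| := abs_add_le _ _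
                  _ = |pdx w₂ (t,x)| * |w₃ (t,x)| + |w₂ (t,x)| * |pdx w₃ (t,x)| := by
                      rw [abs_mul, abs_mul]
            _ ≤ p1 * |pdx w₁ (t,x)|
                + |coef| * (|pdx w₂ (t,x)| * p3 + p2 * |pdx w₃ (t,x)|) := by
                have u1 := mul_le_mul_of_nonneg_right (hb1 x hx) (abs_nonneg (pdx w₁ (t,x)))
                have u2 := mul_le_mul_of_nonneg_left (hb3 x hx) (abs_nonneg (pdx w₂ (t,x)))
                have u3 := mul_le_mul_of_nonneg_right (hb2 x hx) (abs_nonneg (pdx w₃ (t,x)))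
                have u4 : |pdx w₂ (t,x)| * |w₃ (t,x)| + |w₂ (t,x)| * |pdx w₃ (t,x)|
                    ≤ |pdx w₂ (t,x)| * p3 + p2 * |pdx w₃ (t,x)| := add_le_add u2 u3
                have u5 := mul_le_mul_of_nonneg_left u4 (abs_nonneg coef)
                linarith
            _ = p1 * |pdx w₁ (t,x)| + |coef| * (p3 * |pdx w₂ (t,x)| + p2 * |pdx w₃ (t,x)|) := by
                ring
        calc (w₁ (t,x) * pdx w₁ (t,x)
              + coef * (pdx w₂ (t,x) * w₃ (t,x) + w₂ (t,x) * pdx w₃ (t,x)))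
              * pdx (pdx w₁) (t,x)
            ≤ |w₁ (t,x) * pdx w₁ (t,x)
              + coef * (pdx w₂ (t,x) * w₃ (t,x) + w₂ (t,x) * pdx w₃ (t,x))|
              * |pdx (pdx w₁) (t,x)| := t1
          _ ≤ (p1 * |pdx w₁ (t,x)| + |coef| * (p3 * |pdx w₂ (t,x)| + p2 * |pdx w₃ (t,x)|))
              * |pdx (pdx w₁) (t,x)| := mul_le_mul_of_nonneg_right t2 (abs_nonneg _)
          _ = p1 * (|pdx w₁ (t,x)| * |pdx (pdx w₁) (t,x)|)
              + (|coef| * p3) * (|pdx w₂ (t,x)| * |pdx (pdx w₁) (t,x)|)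
              + (|coef| * p2) * (|pdx w₃ (t,x)| * |pdx (pdx w₁) (t,x)|) := by ring
    have i1 : IntervalIntegrable (fun x => |pdx w₁ (t,x)| * |pdx (pdx w₁) (t,x)|)
        MeasureTheory.volume 0 1 :=
      ContinuousOn.intervalIntegrable (by rw [hIcc]; exact c1x.abs.mul c1xx.abs)
    have i2 : IntervalIntegrable (fun x => |pdx w₂ (t,x)| * |pdx (pdx w₁) (t,x)|)
        MeasureTheory.volume 0 1 :=
      ContinuousOn.intervalIntegrable (by rw [hIcc]; exact c2x.abs.mul c1xx.abs)
    have i3 : IntervalIntegrable (fun x => |pdx w₃ (t,x)| * |pdx (pdx w₁) (t,x)|)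
        MeasureTheory.volume 0 1 :=
      ContinuousOn.intervalIntegrable (by rw [hIcc]; exact c3x.abs.mul c1xx.abs)
    have hsplit : ∫ x in (0:ℝ)..1, (p1 * (|pdx w₁ (t,x)| * |pdx (pdx w₁) (t,x)|)
          + (|coef| * p3) * (|pdx w₂ (t,x)| * |pdx (pdx w₁) (t,x)|)
          + (|coef| * p2) * (|pdx w₃ (t,x)| * |pdx (pdx w₁) (t,x)|))
        = p1 * (∫ x in (0:ℝ)..1, |pdx w₁ (t,x)| * |pdx (pdx w₁) (t,x)|)
          + (|coef| * p3) * (∫ x in (0:ℝ)..1, |pdx w₂ (t,x)| * |pdx (pdx w₁) (t,x)|)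
          + (|coef| * p2) * (∫ x in (0:ℝ)..1, |pdx w₃ (t,x)| * |pdx (pdx w₁) (t,x)|) := by
      rw [intervalIntegral.integral_add ((i1.const_mul _).add (i2.const_mul _)) (i3.const_mul _),
        intervalIntegral.integral_add (i1.const_mul _) (i2.const_mul _),
        intervalIntegral.integral_const_mul, intervalIntegral.integral_const_mul,
        intervalIntegral.integral_const_mul]
    have cs1 : ∫ x in (0:ℝ)..1, |pdx w₁ (t,x)| * |pdx (pdx w₁) (t,x)| ≤ p1 * A1 :=
      cs_abs c1x c1xx
    have cs2 : ∫ x in (0:ℝ)..1, |pdx w₂ (t,x)| * |pdx (pdx w₁) (t,x)| ≤ p2 * A1 :=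
      cs_abs c2x c1xx
    have cs3 : ∫ x in (0:ℝ)..1, |pdx w₃ (t,x)| * |pdx (pdx w₁) (t,x)| ≤ p3 * A1 :=
      cs_abs c3x c1xx
    have hp1n : 0 ≤ p1 := Real.sqrt_nonneg _
    have hp2n : 0 ≤ p2 := Real.sqrt_nonneg _
    have hp3n : 0 ≤ p3 := Real.sqrt_nonneg _
    have hcn : 0 ≤ |coef| := abs_nonneg _
    calc ∫ x in (0:ℝ)..1, (w₁ (t,x) * pdx w₁ (t,x)
          + coef * (pdx w₂ (t,x) * w₃ (t,x) + w₂ (t,x) * pdx w₃ (t,x)))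
          * pdx (pdx w₁) (t,x)
        ≤ _ := hmono
      _ = _ := hsplit
      _ ≤ p1 * (p1 * A1) + (|coef| * p3) * (p2 * A1) + (|coef| * p2) * (p3 * A1) := by
          gcongr <;> positivity
      _ = (p1^2 + 2*|coef| * (p2 * p3)) * A1 := by ring
  rw [e1, e2, e3]
  linarith [e4, key]


lemma Jsplit (hu : ContDiffOn ℝ (⊤:ℕ∞) u CBS) (hv : ContDiffOn ℝ (⊤:ℕ∞) v CBS)
    {t : ℝ} (ht : 0 ≤ t) :
    (∫ x in (0:ℝ)..1, ((1:ℝ)/2) * ((pdx u (t,x))^2 + (pdx v (t,x))^2))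
      = (1/2) * ((∫ x in (0:ℝ)..1, (pdx u (t,x))^2) + ∫ x in (0:ℝ)..1, (pdx v (t,x))^2) := by
  have hIcc : uIcc (0:ℝ) 1 = Icc (0:ℝ) 1 := uIcc_of_le zero_le_one
  have i1 : IntervalIntegrable (fun x => (pdx u (t,x))^2) MeasureTheory.volume 0 1 :=
    ContinuousOn.intervalIntegrable
      (by rw [hIcc]; exact (slice_contOn_x (contDiffOn_pdx hu).continuousOn ht).pow 2)
  have i2 : IntervalIntegrable (fun x => (pdx v (t,x))^2) MeasureTheory.volume 0 1 :=
    ContinuousOn.intervalIntegrable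
      (by rw [hIcc]; exact (slice_contOn_x (contDiffOn_pdx hv).continuousOn ht).pow 2)
  calc ∫ x in (0:ℝ)..1, ((1:ℝ)/2) * ((pdx u (t,x))^2 + (pdx v (t,x))^2)
      = ((1:ℝ)/2) * ∫ x in (0:ℝ)..1, ((pdx u (t,x))^2 + (pdx v (t,x))^2) :=
        intervalIntegral.integral_const_mul _ _
    _ = _ := by rw [intervalIntegral.integral_add i1 i2]

lemma DJ_bound {a b : ℝ} (hu : ContDiffOn ℝ (⊤:ℕ∞) u CBS) (hv : ContDiffOn ℝ (⊤:ℕ∞) v CBS)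
    (hequ : ∀ t ≥ (0:ℝ), ∀ x ∈ Icc (0:ℝ) 1,
      deriv (fun s => u (s, x)) t =
        deriv (deriv (fun y => u (t, y))) x - u (t, x) * deriv (fun y => u (t, y)) x
          - a * deriv (fun y => u (t, y) * v (t, y)) x)
    (heqv : ∀ t ≥ (0:ℝ), ∀ x ∈ Icc (0:ℝ) 1,
      deriv (fun s => v (s, x)) t =
        deriv (deriv (fun y => v (t, y))) x - v (t, x) * deriv (fun y => v (t, y)) x
          - b * deriv (fun y => u (t, y) * v (t, y)) x)
    (hbc : ∀ t ≥ (0:ℝ), u (t, 0) = 0 ∧ u (t, 1) = 0 ∧ v (t, 0) = 0 ∧ v (t, 1) = 0)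
    {t : ℝ} (ht : 0 < t) :
    (∫ x in (0:ℝ)..1,
        (pdx u (t,x) * pdt (pdx u) (t,x) + pdx v (t,x) * pdt (pdx v) (t,x)))
      ≤ -(∫ x in (0:ℝ)..1, ((1:ℝ)/2) * ((pdx u (t,x))^2 + (pdx v (t,x))^2))
        + (8 + 16*(|a|+|b|)^2)
          * (∫ x in (0:ℝ)..1, ((1:ℝ)/2) * ((pdx u (t,x))^2 + (pdx v (t,x))^2))^2 := by
  have hIcc : uIcc (0:ℝ) 1 = Icc (0:ℝ) 1 := uIcc_of_le zero_le_one
  have cux := slice_contOn_x (contDiffOn_pdx hu).continuousOn ht.le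
  have cvx := slice_contOn_x (contDiffOn_pdx hv).continuousOn ht.le
  have cuxt := slice_contOn_x (contDiffOn_pdt (contDiffOn_pdx hu)).continuousOn ht.le
  have cvxt := slice_contOn_x (contDiffOn_pdt (contDiffOn_pdx hv)).continuousOn ht.le
  have iu : IntervalIntegrable (fun x => pdx u (t,x) * pdt (pdx u) (t,x))
      MeasureTheory.volume 0 1 :=
    ContinuousOn.intervalIntegrable (by rw [hIcc]; exact cux.mul cuxt)
  have iv : IntervalIntegrable (fun x => pdx v (t,x) * pdt (pdx v) (t,x))
      MeasureTheory.volume 0 1 :=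
    ContinuousOn.intervalIntegrable (by rw [hIcc]; exact cvx.mul cvxt)
  have hsplitDJ : (∫ x in (0:ℝ)..1,
        (pdx u (t,x) * pdt (pdx u) (t,x) + pdx v (t,x) * pdt (pdx v) (t,x)))
      = (∫ x in (0:ℝ)..1, pdx u (t,x) * pdt (pdx u) (t,x))
        + ∫ x in (0:ℝ)..1, pdx v (t,x) * pdt (pdx v) (t,x) :=
    intervalIntegral.integral_add iu iv
  -- boundary conditions
  have hu0 : ∀ s ≥ (0:ℝ), u (s, 0) = 0 := fun s hs => (hbc s hs).1
  have hu1 : ∀ s ≥ (0:ℝ), u (s, 1) = 0 := fun s hs => (hbc s hs).2.1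
  have hv0 : ∀ s ≥ (0:ℝ), v (s, 0) = 0 := fun s hs => (hbc s hs).2.2.1
  have hv1 : ∀ s ≥ (0:ℝ), v (s, 1) = 0 := fun s hs => (hbc s hs).2.2.2
  have hIu := side_est hu hu hv hequ hu0 hu1 ht (hu0 t ht.le) (hv0 t ht.le)
  have hIv := side_est hv hu hv heqv hv0 hv1 ht (hu0 t ht.le) (hv0 t ht.le)
  set Pu := ∫ x in (0:ℝ)..1, (pdx u (t,x))^2 with hPu
  set Pv := ∫ x in (0:ℝ)..1, (pdx v (t,x))^2 with hPv
  set Au2 := ∫ x in (0:ℝ)..1, (pdx (pdx u) (t,x))^2 with hAu2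
  set Av2 := ∫ x in (0:ℝ)..1, (pdx (pdx v) (t,x))^2 with hAv2
  set p := Real.sqrt Pu with hp
  set q := Real.sqrt Pv with hq
  set A := Real.sqrt Au2 with hA
  set B := Real.sqrt Av2 with hB
  set K := |a| + |b| with hKdef
  have hp0 : 0 ≤ p := Real.sqrt_nonneg _
  have hq0 : 0 ≤ q := Real.sqrt_nonneg _
  have hA0 : 0 ≤ A := Real.sqrt_nonneg _
  have hB0 : 0 ≤ B := Real.sqrt_nonneg _
  have hK0 : 0 ≤ K := add_nonneg (abs_nonneg _) (abs_nonneg _)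
  have hKa : |a| ≤ K := le_add_of_nonneg_right (abs_nonneg _)
  have hKb : |b| ≤ K := le_add_of_nonneg_left (abs_nonneg _)
  have hpsq : p^2 = Pu := Real.sq_sqrt (sq_integral_nonneg zero_le_one)
  have hqsq : q^2 = Pv := Real.sq_sqrt (sq_integral_nonneg zero_le_one)
  have hAsq : A^2 = Au2 := Real.sq_sqrt (sq_integral_nonneg zero_le_one)
  have hBsq : B^2 = Av2 := Real.sq_sqrt (sq_integral_nonneg zero_le_one)
  have hpA : p ≤ A := poincare_step hu ht.le (hu0 t ht.le) (hu1 t ht.le)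
  have hqB : q ≤ B := poincare_step hv ht.le (hv0 t ht.le) (hv1 t ht.le)
  have c1 : (p^2 + 2*|a| * (p*q))*A ≤ p^2*A + 2*K*p*q*A := by
    nlinarith [mul_le_mul_of_nonneg_right hKa
      (mul_nonneg (mul_nonneg hp0 hq0) hA0)]
  have c2 : (q^2 + 2*|b| * (p*q))*B ≤ q^2*B + 2*K*p*q*B := by
    nlinarith [mul_le_mul_of_nonneg_right hKb
      (mul_nonneg (mul_nonneg hp0 hq0) hB0)]
  have young := young_combine hA0 hB0 hp0 hq0 hK0 hpA hqB
  have hJt := Jsplit hu hv ht.le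
  rw [hsplitDJ, hJt]
  have e5 : (∫ x in (0:ℝ)..1, pdx u (t,x) * pdt (pdx u) (t,x))
      + (∫ x in (0:ℝ)..1, pdx v (t,x) * pdt (pdx v) (t,x))
      ≤ -A^2 - B^2 + p^2*A + q^2*B + 2*K*p*q*A + 2*K*p*q*B := by
    have hAu : -(Au2) = -A^2 := by rw [hAsq]
    have hBv : -(Av2) = -B^2 := by rw [hBsq]
    linarith [hIu, hIv, c1, c2]
  have efin : -((p^2+q^2)/2) + (2+4*K^2)*(p^2+q^2)^2
      = -((1:ℝ)/2 * (Pu + Pv)) + (8 + 16*K^2) * ((1:ℝ)/2 * (Pu + Pv))^2 := by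
    rw [← hpsq, ← hqsq]; ring
  calc (∫ x in (0:ℝ)..1, pdx u (t,x) * pdt (pdx u) (t,x))
      + (∫ x in (0:ℝ)..1, pdx v (t,x) * pdt (pdx v) (t,x))
      ≤ -A^2 - B^2 + p^2*A + q^2*B + 2*K*p*q*A + 2*K*p*q*B := e5
    _ ≤ -((p^2+q^2)/2) + (2+4*K^2)*(p^2+q^2)^2 := young
    _ = _ := by rw [efin]

end Main

end CB

set_option maxHeartbeats 2000000 in
/-- Main theorem: for smooth solutions `u, v` of the coupled Burgers' equations on
`[0,∞) × [0,1]` with zero Dirichlet boundary conditions and `|a| + |b| > 0`, if the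
initial `H¹₀`-energy `½(‖∂ₓu(0)‖² + ‖∂ₓv(0)‖²)` is less than
`J₊ = (-20 + √(400 + c))/c` with `c = 36000(|a|+|b|)⁴`, then the trajectory approaches
the zero equilibrium in the max-norm:
`sup_{x ∈ [0,1]} |u(t,x)| → 0` and `sup_{x ∈ [0,1]} |v(t,x)| → 0` as `t → ∞`. -/
theorem coupled_burgers_trajectories_to_zero (a b : ℝ) (hab : 0 < |a| + |b|)
    (c : ℝ) (hc : c = 36000 * (|a| + |b|) ^ 4)
    (Jplus : ℝ) (hJplus : Jplus = (-20 + Real.sqrt (400 + c)) / c)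
    (u v : ℝ × ℝ → ℝ)
    (hu : ContDiffOn ℝ (⊤ : ℕ∞) u (Set.Ici (0:ℝ) ×ˢ Set.Icc (0:ℝ) 1))
    (hv : ContDiffOn ℝ (⊤ : ℕ∞) v (Set.Ici (0:ℝ) ×ˢ Set.Icc (0:ℝ) 1))
    (hequ : ∀ t ≥ (0:ℝ), ∀ x ∈ Set.Icc (0:ℝ) 1,
      deriv (fun s => u (s, x)) t =
        deriv (deriv (fun y => u (t, y))) x - u (t, x) * deriv (fun y => u (t, y)) x
          - a * deriv (fun y => u (t, y) * v (t, y)) x)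
    (heqv : ∀ t ≥ (0:ℝ), ∀ x ∈ Set.Icc (0:ℝ) 1,
      deriv (fun s => v (s, x)) t =
        deriv (deriv (fun y => v (t, y))) x - v (t, x) * deriv (fun y => v (t, y)) x
          - b * deriv (fun y => u (t, y) * v (t, y)) x)
    (hbc : ∀ t ≥ (0:ℝ), u (t, 0) = 0 ∧ u (t, 1) = 0 ∧ v (t, 0) = 0 ∧ v (t, 1) = 0)
    (h0 : (1/2) * ((∫ x in (0:ℝ)..1, (deriv (fun y => u (0, y)) x) ^ 2)
        + ∫ x in (0:ℝ)..1, (deriv (fun y => v (0, y)) x) ^ 2) < Jplus) :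
    Filter.Tendsto (fun t => ⨆ x ∈ Set.Icc (0:ℝ) 1, |u (t, x)|) Filter.atTop (nhds 0) ∧
      Filter.Tendsto (fun t => ⨆ x ∈ Set.Icc (0:ℝ) 1, |v (t, x)|) Filter.atTop (nhds 0) := by
  have hu' : ContDiffOn ℝ (⊤:ℕ∞) u CBS := hu
  have hv' : ContDiffOn ℝ (⊤:ℕ∞) v CBS := hv
  obtain ⟨hnum, hJppos⟩ := numeric_Jplus (K := |a| + |b|) hab hc hJplus
  set J : ℝ → ℝ := fun s => ∫ x in (0:ℝ)..1, ((1:ℝ)/2) * ((pdx u (s,x))^2 + (pdx v (s,x))^2)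
    with hJdef
  set D : ℝ → ℝ := fun s => ∫ x in (0:ℝ)..1,
      (pdx u (s,x) * pdt (pdx u) (s,x) + pdx v (s,x) * pdt (pdx v) (s,x)) with hDdef
  have hJnn : ∀ s, 0 ≤ J s := fun s => by
    rw [hJdef]
    exact intervalIntegral.integral_nonneg zero_le_one (fun x _ => by positivity)
  have hcpos : (0:ℝ) < 8 + 16*(|a|+|b|)^2 := by positivity
  -- initial energy
  have h0u : (∫ x in (0:ℝ)..1, (deriv (fun y => u (0, y)) x) ^ 2)
      = ∫ x in (0:ℝ)..1, (pdx u (0,x))^2 :=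
    integral_congr_Ioo (fun x hx => by rw [(hasDerivAt_slice_x hu' le_rfl hx).deriv])
  have h0v : (∫ x in (0:ℝ)..1, (deriv (fun y => v (0, y)) x) ^ 2)
      = ∫ x in (0:ℝ)..1, (pdx v (0,x))^2 :=
    integral_congr_Ioo (fun x hx => by rw [(hasDerivAt_slice_x hv' le_rfl hx).deriv])
  have hJ0 : J 0 < Jplus := by
    calc J 0 = (1/2) * ((∫ x in (0:ℝ)..1, (pdx u (0,x))^2)
          + ∫ x in (0:ℝ)..1, (pdx v (0,x))^2) := by
          rw [hJdef]; exact Jsplit hu' hv' le_rfl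
      _ = (1/2) * ((∫ x in (0:ℝ)..1, (deriv (fun y => u (0, y)) x) ^ 2)
          + ∫ x in (0:ℝ)..1, (deriv (fun y => v (0, y)) x) ^ 2) := by rw [h0u, h0v]
      _ < Jplus := h0
  set Jm := (J 0 + Jplus)/2 with hJmdef
  have hJ0m : J 0 < Jm := by rw [hJmdef]; linarith
  have hJmP : Jm < Jplus := by rw [hJmdef]; linarith
  have hC2Jm : (8 + 16*(|a|+|b|)^2) * Jm < 1 := by
    nlinarith [mul_lt_mul_of_pos_left hJmP hcpos]
  have hDer : ∀ s, 0 < s → HasDerivAt J (D s) s := by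
    intro s hs
    rw [hJdef, hDdef]
    exact hasDerivAt_J hu' hv' hs
  have hBound : ∀ s, 0 < s → D s ≤ -(J s) + (8 + 16*(|a|+|b|)^2) * (J s)^2 := by
    intro s hs
    rw [hJdef, hDdef]
    exact DJ_bound hu' hv' hequ heqv hbc hs
  have hJcont : ContinuousOn J (Ici (0:ℝ)) := by rw [hJdef]; exact contJ hu' hv'
  -- invariance : J stays below Jm
  have hInv : ∀ s, 0 ≤ s → J s < Jm := by
    by_contra hcon
    push_neg at hcon
    obtain ⟨t₁', ht₁'0, ht₁'⟩ := hcon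
    set E := {r : ℝ | 0 ≤ r ∧ Jm ≤ J r} with hE
    have hEne : E.Nonempty := ⟨t₁', ht₁'0, ht₁'⟩
    have hEbdd : BddBelow E := ⟨0, fun r hr => hr.1⟩
    have hEclosed : IsClosed E := by
      have hEeq : E = Ici 0 ∩ J ⁻¹' (Ici Jm) := by
        ext r
        simp [hE, Set.mem_inter_iff, Set.mem_preimage, Set.mem_Ici]
      rw [hEeq]
      exact hJcont.preimage_isClosed_of_isClosed isClosed_Ici isClosed_Ici
    set t₁ := sInf E with ht₁def
    have ht₁E : t₁ ∈ E := hEclosed.csInf_mem hEne hEbdd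
    have ht₁pos : 0 < t₁ := by
      rcases eq_or_lt_of_le ht₁E.1 with h | h
      · exfalso
        have : Jm ≤ J 0 := by rw [h]; exact ht₁E.2
        linarith
      · exact h
    have hlt : ∀ r, 0 ≤ r → r < t₁ → J r < Jm := by
      intro r hr0 hrt
      by_contra hge
      push_neg at hge
      exact absurd (csInf_le hEbdd ⟨hr0, hge⟩) (not_le.2 hrt)
    have hanti : AntitoneOn J (Icc 0 t₁) := by
      apply antitoneOn_of_deriv_nonpos (convex_Icc 0 t₁) (hJcont.mono Icc_subset_Ici_self)
      · intro s hs
        rw [interior_Icc] at hs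
        exact (hDer s hs.1).differentiableAt.differentiableWithinAt
      · intro s hs
        rw [interior_Icc] at hs
        rw [(hDer s hs.1).deriv]
        have h5 := hBound s hs.1
        have h6 := hlt s hs.1.le hs.2
        have h7 := hJnn s
        have h8 : (8+16*(|a|+|b|)^2) * (J s)^2 ≤ ((8+16*(|a|+|b|)^2) * Jm) * J s := by
          nlinarith [mul_le_mul_of_nonneg_right
            (mul_le_mul_of_nonneg_left h6.le hcpos.le) h7]
        have h9 : ((8+16*(|a|+|b|)^2) * Jm) * J s ≤ 1 * J s :=
          mul_le_mul_of_nonneg_right hC2Jm.le h7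
        linarith
    have hfin := hanti (left_mem_Icc.2 ht₁E.1) (right_mem_Icc.2 ht₁E.1) ht₁E.1
    linarith [ht₁E.2, hfin]
  -- exponential decay
  have main_decay : ∃ δ, 0 < δ ∧ ∀ s, 0 ≤ s → J s ≤ J 0 * Real.exp (-(δ*s)) := by
    refine ⟨1 - (8 + 16*(|a|+|b|)^2) * Jm, by linarith, ?_⟩
    set δ := 1 - (8 + 16*(|a|+|b|)^2) * Jm with hδdef
    have hδpos : 0 < δ := by rw [hδdef]; linarith
    have hexp : ∀ s : ℝ, HasDerivAt (fun r => Real.exp (δ*r)) (Real.exp (δ*s)*δ) s := by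
      intro s
      simpa using (((hasDerivAt_id s).const_mul δ).exp)
    have hanti2 : AntitoneOn (fun s => J s * Real.exp (δ*s)) (Ici 0) := by
      apply antitoneOn_of_deriv_nonpos (convex_Ici 0)
      · exact hJcont.mul
          ((Real.continuous_exp.comp (continuous_const.mul continuous_id)).continuousOn)
      · intro s hs
        rw [interior_Ici] at hs
        exact ((hDer s hs).mul (hexp s)).differentiableAt.differentiableWithinAt
      · intro s hs
        rw [interior_Ici] at hs
        rw [show deriv (fun s => J s * Real.exp (δ*s)) s = _ from ((hDer s hs).mul (hexp s)).deriv]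
        have h5 := hBound s hs
        have h6 := hInv s hs.le
        have h7 := hJnn s
        have h8 : (8+16*(|a|+|b|)^2) * (J s)^2 ≤ ((8+16*(|a|+|b|)^2) * Jm) * J s := by
          nlinarith [mul_le_mul_of_nonneg_right
            (mul_le_mul_of_nonneg_left h6.le hcpos.le) h7]
        have h1 : D s + δ * J s ≤ 0 := by
          rw [hδdef]
          nlinarith [h5, h8, h7]
        nlinarith [h1, Real.exp_pos (δ*s), hJnn s]
      
    intro s hs
    have h3 := hanti2 self_mem_Ici (mem_Ici.2 hs) hs
    simp only [mul_zero, Real.exp_zero, mul_one] at h3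
    have hE := Real.exp_pos (δ*s)
    rw [Real.exp_neg, ← div_eq_mul_inv, le_div_iff₀ hE]
    exact h3
  obtain ⟨δ, hδpos, hdecay⟩ := main_decay
  -- the squeeze
  have l1 : Tendsto (fun s : ℝ => δ * s) atTop atTop :=
    Tendsto.const_mul_atTop hδpos tendsto_id
  have l2 : Tendsto (fun s : ℝ => -(δ * s)) atTop atBot := tendsto_neg_atTop_atBot.comp l1
  have l3 : Tendsto (fun s : ℝ => Real.exp (-(δ * s))) atTop (nhds 0) :=
    Real.tendsto_exp_atBot.comp l2
  have l4 : Tendsto (fun s : ℝ => 2 * (J 0 * Real.exp (-(δ * s)))) atTop (nhds 0) := by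
    have := l3.const_mul (2 * J 0)
    simp only [mul_zero] at this
    have heq : (fun s : ℝ => 2 * (J 0 * Real.exp (-(δ * s))))
        = fun s : ℝ => (2 * J 0) * Real.exp (-(δ * s)) := by
      funext s; ring
    rw [heq]
    exact this
  have hgb : Tendsto (fun s : ℝ => Real.sqrt (2 * (J 0 * Real.exp (-(δ * s))))) atTop (nhds 0) := by
    have hs0 : Tendsto (fun x : ℝ => Real.sqrt x) (nhds 0) (nhds 0) := by
      have := Real.continuous_sqrt.tendsto 0
      rwa [Real.sqrt_zero] at this
    exact hs0.comp l4
  have key : ∀ (w : ℝ × ℝ → ℝ), ContDiffOn ℝ (⊤:ℕ∞) w CBS → (∀ s ≥ (0:ℝ), w (s,0) = 0) →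
      (∀ s, 0 ≤ s → (∫ x in (0:ℝ)..1, (pdx w (s,x))^2) ≤ 2 * J s) →
      Tendsto (fun s => ⨆ x ∈ Icc (0:ℝ) 1, |w (s, x)|) atTop (nhds 0) := by
    intro w hw hw0 hwJ
    apply squeeze_zero' (g := fun s => Real.sqrt (2 * (J 0 * Real.exp (-(δ * s)))))
    · filter_upwards with s
      exact Real.iSup_nonneg (fun x => Real.iSup_nonneg (fun _ => abs_nonneg _))
    · filter_upwards [eventually_ge_atTop (0:ℝ)] with s hs
      have hb : ∀ x : ℝ, (⨆ _ : x ∈ Icc (0:ℝ) 1, |w (s,x)|)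
          ≤ Real.sqrt (2 * (J 0 * Real.exp (-(δ * s)))) := by
        intro x
        apply Real.iSup_le _ (Real.sqrt_nonneg _)
        intro hx
        calc |w (s,x)| ≤ Real.sqrt (∫ y in (0:ℝ)..1, (pdx w (s,y))^2) :=
            abs_le_sqrt_int hw hs (hw0 s hs) hx
          _ ≤ Real.sqrt (2 * J s) := Real.sqrt_le_sqrt (hwJ s hs)
          _ ≤ Real.sqrt (2 * (J 0 * Real.exp (-(δ * s)))) :=
            Real.sqrt_le_sqrt (by nlinarith [hdecay s hs])
      exact Real.iSup_le hb (Real.sqrt_nonneg _)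
    · exact hgb
  constructor
  · apply key u hu' (fun s hs => (hbc s hs).1)
    intro s hs
    have hJs : J s = (1/2) * ((∫ x in (0:ℝ)..1, (pdx u (s,x))^2)
        + ∫ x in (0:ℝ)..1, (pdx v (s,x))^2) := by
      rw [hJdef]; exact Jsplit hu' hv' hs
    have hPv : 0 ≤ ∫ x in (0:ℝ)..1, (pdx v (s,x))^2 := sq_integral_nonneg zero_le_one
    linarith [hJs]
  · apply key v hv' (fun s hs => (hbc s hs).2.2.1)
    intro s hs
    have hJs : J s = (1/2) * ((∫ x in (0:ℝ)..1, (pdx u (s,x))^2)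
        + ∫ x in (0:ℝ)..1, (pdx v (s,x))^2) := by
      rw [hJdef]; exact Jsplit hu' hv' hs
    have hPu : 0 ≤ ∫ x in (0:ℝ)..1, (pdx u (s,x))^2 := sq_integral_nonneg zero_le_one
    linarith [hJs]
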